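/- Let c = (cᵢⱼ) be a real 2×2 symmetric matrix (cᵀ = c) with det c = 1, trace(c) > 0 and c ≠ 1, and define m(c) = (1/2)·√((c₁₁ − c₂₂)² + (c₁₂ + c₂₁)²). Then there exist real numbers a > 0 and b such that cosh a = trace(c)/2, sinh a = m(c), cos(2b) = (c₁₁ − c₂₂)/(2·m(c)), sin(2b) = c₁₂/m(c), and c = R(b) · !![eᵃ, 0; 0, e⁻ᵃ] · R(b)ᵀ, where R(b) = !![cos b, −sin b; sin b, cos b]. Conversely, every matrix of the form R(b) · !![eᵃ, 0; 0, e⁻ᵃ] · R(b)ᵀ with a > 0 is symmetric, has determinant 1, positive trace, and is not the identity. -/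
import Mathlib


open Real Matrix

noncomputable def mInv (c : Matrix (Fin 2) (Fin 2) ℝ) : ℝ :=
  Real.sqrt ((c 0 0 - c 1 1) ^ 2 + (c 0 1 + c 1 0) ^ 2) / 2

noncomputable def rot (b : ℝ) : Matrix (Fin 2) (Fin 2) ℝ :=
  !![cos b, -sin b; sin b, cos b]

lemma rot_T (b : ℝ) : (rot b)ᵀ = !![cos b, sin b; -sin b, cos b] := by
  ext i j; fin_cases i <;> fin_cases j <;> simp [rot]

lemma prod_eq (a b : ℝ) : rot b * !![Real.exp a, 0; 0, Real.exp (-a)] * (rot b)ᵀ =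
    !![Real.exp a * cos b ^ 2 + Real.exp (-a) * sin b ^ 2,
       (Real.exp a - Real.exp (-a)) * (sin b * cos b);
       (Real.exp a - Real.exp (-a)) * (sin b * cos b),
       Real.exp a * sin b ^ 2 + Real.exp (-a) * cos b ^ 2] := by
  rw [rot_T, rot, Matrix.mul_fin_two, Matrix.mul_fin_two]
  congr 1 <;> ring

set_option maxHeartbeats 1000000 in
theorem symmetric_det_one_pos_trace_decomposition :
    (∀ c : Matrix (Fin 2) (Fin 2) ℝ, cᵀ = c → c.det = 1 → 0 < c.trace → c ≠ 1 →
      ∃ a b : ℝ, 0 < a ∧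
        Real.cosh a = c.trace / 2 ∧
        Real.sinh a = mInv c ∧
        Real.cos (2 * b) = (c 0 0 - c 1 1) / (2 * mInv c) ∧
        Real.sin (2 * b) = c 0 1 / mInv c ∧
        c = rot b * !![Real.exp a, 0; 0, Real.exp (-a)] * (rot b)ᵀ) ∧
    (∀ a b : ℝ, 0 < a →
      (rot b * !![Real.exp a, 0; 0, Real.exp (-a)] * (rot b)ᵀ)ᵀ =
        rot b * !![Real.exp a, 0; 0, Real.exp (-a)] * (rot b)ᵀ ∧
      (rot b * !![Real.exp a, 0; 0, Real.exp (-a)] * (rot b)ᵀ).det = 1 ∧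
      0 < (rot b * !![Real.exp a, 0; 0, Real.exp (-a)] * (rot b)ᵀ).trace ∧
      rot b * !![Real.exp a, 0; 0, Real.exp (-a)] * (rot b)ᵀ ≠ 1) := by
  constructor
  · intro c hsym hdet htr hne
    have h10 : c 1 0 = c 0 1 := by
      have := congrFun (congrFun hsym 1) 0
      simpa using this.symm
    rw [Matrix.det_fin_two, h10] at hdet
    rw [Matrix.trace_fin_two] at htr
    set p := c 0 0 with hp
    set q := c 1 1 with hq
    set r := c 0 1 with hr
    -- hdet : p * q - r * r = 1
    have key : (p + q) ^ 2 - 4 = (p - q) ^ 2 + 4 * r ^ 2 := by linear_combination 4 * hdet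
    have ht2 : 2 < p + q := by
      rcases lt_or_ge 2 (p + q) with h | h
      · exact h
      · exfalso
        have h1 : (p - q) ^ 2 + 4 * r ^ 2 ≤ 0 := by nlinarith
        have hpq : p = q := by nlinarith [sq_nonneg (p - q), sq_nonneg r]
        have hr0 : r = 0 := by nlinarith [sq_nonneg (p - q), sq_nonneg r]
        have hp1 : p = 1 := by nlinarith
        apply hne
        ext i j
        fin_cases i <;> fin_cases j <;>
          simp [Matrix.one_apply, ← hp, ← hq, ← hr, h10, hp1, hr0, ← hpq]
    set s := Real.sqrt ((p + q) ^ 2 - 4) with hs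
    have hs2 : s ^ 2 = (p + q) ^ 2 - 4 := Real.sq_sqrt (by nlinarith)
    have hspos : 0 < s := Real.sqrt_pos.mpr (by nlinarith)
    have hsne : s ≠ 0 := ne_of_gt hspos
    have hmarg : (c 0 0 - c 1 1) ^ 2 + (c 0 1 + c 1 0) ^ 2 = (p + q) ^ 2 - 4 := by
      rw [h10, ← hp, ← hq, ← hr]; linear_combination -key
    have hm : mInv c = s / 2 := by rw [mInv, hmarg]
    -- a
    set u := (p + q) / 2 + s / 2 with hu
    have hupos : 0 < u := by positivity
    set a := Real.log u with ha
    have hE : Real.exp a = u := Real.exp_log hupos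
    have hmul : u * ((p + q) / 2 - s / 2) = 1 := by rw [hu]; nlinarith [hs2]
    have hF : Real.exp (-a) = (p + q) / 2 - s / 2 := by
      rw [Real.exp_neg, hE]
      exact (eq_inv_of_mul_eq_one_left (by linear_combination hmul)).symm
    have hapos : 0 < a := Real.log_pos (by rw [hu]; nlinarith)
    -- b
    set x := (p - q) / s with hx
    set y := 2 * r / s with hy
    have hxy : x ^ 2 + y ^ 2 = 1 := by
      rw [hx, hy]
      field_simp
      linear_combination -hs2 - key
    have hx2 : x ^ 2 ≤ 1 := by nlinarith [sq_nonneg y]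
    have hx1 : -1 ≤ x ∧ x ≤ 1 := abs_le.mp (abs_le_one_iff_mul_self_le_one.mpr (by nlinarith))
    set θ := if 0 ≤ y then Real.arccos x else -Real.arccos x with hθ
    have hcosθ : Real.cos θ = x := by
      rw [hθ]; split <;> simp [Real.cos_arccos hx1.1 hx1.2]
    have hsinθ : Real.sin θ = y := by
      rw [hθ]; split_ifs with h
      · rw [Real.sin_arccos]
        rw [show 1 - x ^ 2 = y ^ 2 by linarith]
        exact (Real.sqrt_sq h)
      · push_neg at h
        rw [Real.sin_neg, Real.sin_arccos,
          show 1 - x ^ 2 = y ^ 2 by linarith, show y ^ 2 = (-y) ^ 2 by ring,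
          Real.sqrt_sq (by linarith)]
        ring
    refine ⟨a, θ / 2, hapos, ?_, ?_, ?_, ?_, ?_⟩
    · rw [Real.cosh_eq, hE, hF, Matrix.trace_fin_two, ← hp, ← hq]; ring
    · rw [Real.sinh_eq, hE, hF, hm]; ring
    · rw [show 2 * (θ / 2) = θ by ring, hcosθ, hm, hx]
      rw [show 2 * (s / 2) = s by ring]
    · rw [show 2 * (θ / 2) = θ by ring, hsinθ, hm, hy]
      ring
    · -- matrix identity
      have hC := Real.sin_sq_add_cos_sq (θ/2)
      have hcos2 : cos θ = cos (θ/2) ^ 2 - sin (θ/2) ^ 2 := by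
        have h := Real.cos_two_mul (θ/2)
        rw [show 2 * (θ/2) = θ by ring] at h
        rw [h]; linarith
      have hsin2 : sin θ = 2 * sin (θ/2) * cos (θ/2) := by
        have h := Real.sin_two_mul (θ/2)
        rw [show 2 * (θ/2) = θ by ring] at h
        rw [h]
      have h2' : s * (cos (θ/2) ^ 2 - sin (θ/2) ^ 2) = p - q := by
        rw [← hcos2, hcosθ, hx]; field_simp
      have h3' : s * (sin (θ/2) * cos (θ/2)) = r := by
        have hh : s * sin θ = 2 * r := by rw [hsinθ, hy]; field_simp
        rw [hsin2] at hh; linarith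
      rw [prod_eq]
      ext i j
      fin_cases i <;> fin_cases j <;>
        simp only [Matrix.cons_val', Matrix.cons_val_zero, Matrix.cons_val_one,
          Matrix.head_cons, Matrix.head_fin_const, Matrix.empty_val',
          Matrix.cons_val_fin_one, Matrix.of_apply, Fin.isValue, Fin.mk_zero, Fin.mk_one]
      · show p = _
        linear_combination -((cos (θ/2))^2 * hE) - (sin (θ/2))^2 * hF - (1/2) * h2' - ((p+q)/2) * hC
      · show r = _
        linear_combination -((sin (θ/2) * cos (θ/2)) * hE) + (sin (θ/2) * cos (θ/2)) * hF - h3'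
      · show c 1 0 = _
        rw [h10]
        linear_combination -((sin (θ/2) * cos (θ/2)) * hE) + (sin (θ/2) * cos (θ/2)) * hF - h3'
      · show q = _
        linear_combination -((sin (θ/2))^2 * hE) - (cos (θ/2))^2 * hF + (1/2) * h2' - ((p+q)/2) * hC
  · -- converse
    intro a b ha
    have hC := Real.sin_sq_add_cos_sq b
    have hEF : Real.exp a * Real.exp (-a) = 1 := by
      rw [← Real.exp_add]; simp
    rw [prod_eq]
    have htr : (!![Real.exp a * cos b ^ 2 + Real.exp (-a) * sin b ^ 2,
         (Real.exp a - Real.exp (-a)) * (sin b * cos b);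
         (Real.exp a - Real.exp (-a)) * (sin b * cos b),
         Real.exp a * sin b ^ 2 + Real.exp (-a) * cos b ^ 2]).trace
        = Real.exp a + Real.exp (-a) := by
      rw [Matrix.trace_fin_two_of]; linear_combination (Real.exp a + Real.exp (-a)) * hC
    refine ⟨?_, ?_, ?_, ?_⟩
    · ext i j; fin_cases i <;> fin_cases j <;> simp
    · rw [Matrix.det_fin_two_of]
      linear_combination (Real.exp a * Real.exp (-a) * (sin b^2 + cos b^2 + 1)) * hC + hEF
    · rw [htr]; positivity
    · intro h
      have h2 : 2 < Real.exp a + Real.exp (-a) := by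
        have := Real.one_lt_cosh.mpr (ne_of_gt ha)
        rw [Real.cosh_eq] at this; linarith
      have := congrArg Matrix.trace h
      rw [htr, Matrix.trace_one] at this
      simp at this
      linarith
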